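/- For an odd prime p and r ≥ 1, the number of images of the squaring map y ↦ y^2 on Z/p^r Z equals (p^(r+1) + p + 2)/(2(p+1)) if r is even, and (p^(r+1) + 2p + 1)/(2(p+1)) if r is odd. -/

import Mathlib

open Set

private lemma one_ne_neg_one' {n : ℕ} (hn : 3 ≤ n) : (1 : ZMod n) ≠ -1 := by
  haveI : NeZero n := ⟨by omega⟩
  intro h
  have h2 : ((2 : ℕ) : ZMod n) = 0 := by push_cast; linear_combination h
  have hd := (ZMod.natCast_eq_zero_iff 2 n).mp h2
  have := Nat.le_of_dvd (by norm_num) hd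
  omega

private lemma zmod_not_isUnit_zero {n : ℕ} (hn : 2 ≤ n) : ¬ IsUnit (0 : ZMod n) := by
  rw [isUnit_zero_iff]
  intro h
  have h1 : ((1 : ℕ) : ZMod n) = 0 := by exact_mod_cast h.symm
  have := Nat.le_of_dvd one_pos ((ZMod.natCast_eq_zero_iff 1 n).mp h1)
  omega

private lemma sq_eq_one_cases {p : ℕ} (hp : p.Prime) (hp2 : p ≠ 2) {m : ℕ} (hm : 1 ≤ m)
    {x : ZMod (p ^ m)} (hx : x ^ 2 = 1) : x = 1 ∨ x = -1 := by
  haveI : NeZero (p ^ m) := ⟨pow_ne_zero m hp.pos.ne'⟩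
  have B : ((x.val : ℕ) : ZMod (p ^ m)) = x := ZMod.natCast_rightInverse x
  have h0 : ((((x.val : ℤ) - 1) * ((x.val : ℤ) + 1) : ℤ) : ZMod (p ^ m)) = 0 := by
    push_cast
    rw [B]
    linear_combination hx
  have hdvd : ((p : ℤ)) ^ m ∣ ((x.val : ℤ) - 1) * ((x.val : ℤ) + 1) := by
    have := (ZMod.intCast_zmod_eq_zero_iff_dvd _ (p ^ m)).mp h0
    push_cast at this
    exact this
  have hpZ : Prime (p : ℤ) := Nat.prime_iff_prime_int.mp hp
  have hpd : (p : ℤ) ∣ ((x.val : ℤ) - 1) * ((x.val : ℤ) + 1) :=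
    dvd_trans (dvd_pow_self _ (by omega : m ≠ 0)) hdvd
  have htwo : ¬ ((p : ℤ) ∣ ((x.val : ℤ) - 1) ∧ (p : ℤ) ∣ ((x.val : ℤ) + 1)) := by
    rintro ⟨h1, h2⟩
    have : (p : ℤ) ∣ 2 := by
      have := dvd_sub h2 h1
      simpa using this
    have hn : (p : ℕ) ∣ 2 := by exact_mod_cast this
    have := Nat.le_of_dvd (by norm_num) hn
    have := hp.two_le
    omega
  rcases hpZ.dvd_mul.mp hpd with h | h
  · left
    have hnd : ¬ (p : ℤ) ∣ ((x.val : ℤ) + 1) := fun hc => htwo ⟨h, hc⟩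
    have hcop : IsCoprime ((p : ℤ) ^ m) ((x.val : ℤ) + 1) :=
      (hpZ.coprime_iff_not_dvd.mpr hnd).pow_left
    have hdd : ((p : ℤ)) ^ m ∣ ((x.val : ℤ) - 1) := hcop.dvd_of_dvd_mul_right hdvd
    have h1 : (((x.val : ℤ) - 1 : ℤ) : ZMod (p ^ m)) = 0 :=
      (ZMod.intCast_zmod_eq_zero_iff_dvd _ _).mpr (by push_cast; exact hdd)
    push_cast at h1
    rw [B] at h1
    exact sub_eq_zero.mp h1
  · right
    have hnd : ¬ (p : ℤ) ∣ ((x.val : ℤ) - 1) := fun hc => htwo ⟨hc, h⟩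
    have hcop : IsCoprime ((p : ℤ) ^ m) ((x.val : ℤ) - 1) :=
      (hpZ.coprime_iff_not_dvd.mpr hnd).pow_left
    have hdd : ((p : ℤ)) ^ m ∣ ((x.val : ℤ) + 1) := by
      apply hcop.dvd_of_dvd_mul_right
      rw [mul_comm] at hdvd
      exact hdvd
    have h1 : (((x.val : ℤ) + 1 : ℤ) : ZMod (p ^ m)) = 0 :=
      (ZMod.intCast_zmod_eq_zero_iff_dvd _ _).mpr (by push_cast; exact hdd)
    push_cast at h1
    rw [B] at h1
    exact eq_neg_of_add_eq_zero_left h1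

private lemma two_mul_card_unit_squares {p : ℕ} (hp : p.Prime) (hp2 : p ≠ 2) {m : ℕ}
    (hm : 1 ≤ m) :
    2 * Nat.card {x : ZMod (p ^ m) | IsUnit x ∧ IsSquare x} = p ^ (m - 1) * (p - 1) := by
  haveI : NeZero (p ^ m) := ⟨pow_ne_zero m hp.pos.ne'⟩
  have hp3 : 3 ≤ p := by have := hp.two_le; omega
  have hn3 : 3 ≤ p ^ m := le_trans hp3 (Nat.le_self_pow (by omega) p)
  set G := (ZMod (p ^ m))ˣ with hG
  set φ : G →* G := powMonoidHom 2 with hφ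
  have e : φ.range ≃ {x : ZMod (p ^ m) | IsUnit x ∧ IsSquare x} := by
    refine Equiv.ofBijective
      (fun u => ⟨((u : G) : ZMod (p ^ m)), (u : G).isUnit, ?_⟩) ⟨?_, ?_⟩
    · obtain ⟨v, hv⟩ := u.2
      exact ⟨(v : ZMod (p ^ m)), by rw [← hv]; rw [hφ, powMonoidHom_apply, sq, Units.val_mul]⟩
    · intro a b hab
      exact Subtype.ext (Units.ext (congrArg Subtype.val hab))
    · rintro ⟨x, hu, y, rfl⟩
      have hy : IsUnit y := isUnit_of_mul_isUnit_left hu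
      obtain ⟨v, rfl⟩ := hy
      exact ⟨⟨v ^ 2, ⟨v, rfl⟩⟩, Subtype.ext (by simp [sq])⟩
  have hrange : Nat.card G = Nat.card φ.range * Nat.card φ.ker := by
    rw [Subgroup.card_eq_card_quotient_mul_card_subgroup φ.ker,
      Nat.card_congr (QuotientGroup.quotientKerEquivRange φ).toEquiv]
  have hker : Nat.card φ.ker = 2 := by
    have hset : ∀ u : G, u ∈ φ.ker ↔ u ∈ ({1, -1} : Set G) := by
      intro u
      rw [MonoidHom.mem_ker]
      constructor
      · intro h
        have hu2 : u ^ 2 = 1 := by simpa [hφ, powMonoidHom] using h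
        have h2 : ((u : ZMod (p ^ m))) ^ 2 = 1 := by
          rw [← Units.val_pow_eq_pow_val, hu2, Units.val_one]
        rcases sq_eq_one_cases hp hp2 hm h2 with h' | h'
        · exact Or.inl (Units.ext h')
        · exact Or.inr (Units.ext (by rw [Units.val_neg, Units.val_one]; exact h'))
      · rintro (rfl | rfl) <;> simp [hφ, powMonoidHom] <;> exact (neg_one_sq : ((-1 : (ZMod (p ^ m))ˣ)) ^ 2 = 1)
    have e2 : φ.ker ≃ ({1, -1} : Set G) := Equiv.subtypeEquivRight hset
    rw [Nat.card_congr e2, Nat.card_coe_set_eq, Set.ncard_pair]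
    intro h
    exact one_ne_neg_one' hn3 (congrArg Units.val h)
  have htot : Nat.card G = p ^ (m - 1) * (p - 1) := by
    rw [hG, Nat.card_eq_fintype_card, ZMod.card_units_eq_totient,
      Nat.totient_prime_pow hp (by omega)]
  rw [← Nat.card_congr e, mul_comm, ← hker, ← hrange, htot]

private lemma card_squares_step {p : ℕ} (hp : p.Prime) (r : ℕ) :
    Nat.card {x : ZMod (p ^ (r + 2)) | IsSquare x} =
      Nat.card {x : ZMod (p ^ (r + 2)) | IsUnit x ∧ IsSquare x} +
      Nat.card {x : ZMod (p ^ r) | IsSquare x} := by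
  haveI h1 : NeZero (p ^ (r + 2)) := ⟨pow_ne_zero _ hp.pos.ne'⟩
  haveI h2 : NeZero (p ^ r) := ⟨pow_ne_zero _ hp.pos.ne'⟩
  set n := p ^ (r + 2) with hn
  set c : ZMod n →+* ZMod (p ^ r) := ZMod.castHom (pow_dvd_pow p (Nat.le_add_right r 2)) _ with hc
  set f : ZMod (p ^ r) → ZMod n := fun a => (p : ZMod n) ^ 2 * (a.val : ZMod n) with hf
  have hp0 : ((p : ZMod n)) ^ (r + 2) = 0 := by
    rw [← Nat.cast_pow, ← hn, ZMod.natCast_self]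
  have hcval : ∀ z : ZMod n, (c z).val = z.val % p ^ r := by
    intro z
    rw [hc, ZMod.castHom_apply, ← ZMod.natCast_val, ZMod.val_natCast]
  have hkey : ∀ z : ZMod n, f (c z) = (p : ZMod n) ^ 2 * z := by
    intro z
    have hsplit : p ^ r * (z.val / p ^ r) + z.val % p ^ r = z.val := Nat.div_add_mod _ _
    have hz : ((z.val : ℕ) : ZMod n) = z := ZMod.natCast_rightInverse z
    show (p : ZMod n) ^ 2 * (((c z).val : ℕ) : ZMod n) = _
    rw [hcval]
    calc (p : ZMod n) ^ 2 * ((z.val % p ^ r : ℕ) : ZMod n)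
        = (p : ZMod n) ^ 2 * (((p ^ r * (z.val / p ^ r) + z.val % p ^ r : ℕ)) : ZMod n)
          - (p : ZMod n) ^ (r + 2) * ((z.val / p ^ r : ℕ) : ZMod n) := by push_cast; ring
      _ = (p : ZMod n) ^ 2 * z := by rw [hsplit, hz, hp0]; ring
  have hval : ∀ a : ZMod (p ^ r), (f a).val = p ^ 2 * a.val := by
    intro a
    have hfa : f a = ((p ^ 2 * a.val : ℕ) : ZMod n) := by rw [hf]; push_cast; ring
    rw [hfa, ZMod.val_natCast, Nat.mod_eq_of_lt]
    calc p ^ 2 * a.val < p ^ 2 * p ^ r := by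
          have hlt := ZMod.val_lt a
          exact mul_lt_mul_of_pos_left hlt (pow_pos hp.pos 2)
      _ = n := by rw [hn]; ring
  have hinj : Function.Injective f := by
    intro a b hab
    apply ZMod.val_injective
    have hv := congrArg ZMod.val hab
    rw [hval, hval] at hv
    exact Nat.eq_of_mul_eq_mul_left (pow_pos hp.pos 2) hv
  have hset : {x : ZMod n | IsSquare x ∧ ¬ IsUnit x} = f '' {a : ZMod (p ^ r) | IsSquare a} := by
    ext x
    simp only [Set.mem_setOf_eq, Set.mem_image]
    constructor
    · rintro ⟨⟨y, rfl⟩, hnu⟩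
      have hy : ¬ IsUnit y := fun h => hnu (h.mul h)
      have hpy : p ∣ y.val := by
        by_contra hpd
        apply hy
        have hcop : Nat.Coprime y.val n := by
          show Nat.Coprime y.val (p ^ (r + 2))
          exact Nat.Coprime.pow_right _ (Nat.coprime_comm.mp (hp.coprime_iff_not_dvd.mpr hpd))
        have := (ZMod.isUnit_iff_coprime y.val n).mpr hcop
        rwa [ZMod.natCast_rightInverse y] at this
      obtain ⟨k, hk⟩ := hpy
      have hyk : y = (p : ZMod n) * (k : ZMod n) := by
        have hy' : ((y.val : ℕ) : ZMod n) = y := ZMod.natCast_rightInverse y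
        rw [← hy', hk]
        push_cast
        ring
      refine ⟨c ((k : ZMod n) ^ 2), ⟨c (k : ZMod n), by rw [← map_mul]; ring_nf⟩, ?_⟩
      rw [hkey, hyk]
      ring
    · rintro ⟨a, ⟨d, rfl⟩, rfl⟩
      set w : ZMod n := (d.val : ZMod n) with hw
      have hdn : d.val < n := lt_of_lt_of_le (ZMod.val_lt d) (Nat.pow_le_pow_right hp.pos (by omega))
      have hcw : c w = d := by
        apply ZMod.val_injective
        rw [hcval, hw, ZMod.val_natCast, Nat.mod_eq_of_lt hdn, Nat.mod_eq_of_lt (ZMod.val_lt d)]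
      have hfd : f (d * d) = ((p : ZMod n) * w) * ((p : ZMod n) * w) := by
        have hdd : d * d = c (w * w) := by rw [map_mul, hcw]
        rw [hdd, hkey]
        ring
      refine ⟨⟨(p : ZMod n) * w, hfd⟩, ?_⟩
      rw [hfd]
      intro hu
      have hup : IsUnit (p : ZMod n) :=
        isUnit_of_mul_isUnit_left (isUnit_of_mul_isUnit_left hu)
      have h0 : IsUnit ((p : ZMod n) ^ (r + 2)) := hup.pow _
      rw [hp0, isUnit_zero_iff] at h0
      have h1 : ((1 : ℕ) : ZMod n) = 0 := by exact_mod_cast h0.symm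
      have hd1 := Nat.le_of_dvd one_pos ((ZMod.natCast_eq_zero_iff 1 n).mp h1)
      have hn2 : 2 ≤ n := by
        rw [hn]
        calc 2 ≤ p := hp.two_le
          _ ≤ p ^ (r + 2) := Nat.le_self_pow (by omega) p
      omega
  have hunion : {x : ZMod n | IsSquare x} =
      {x : ZMod n | IsUnit x ∧ IsSquare x} ∪ {x : ZMod n | IsSquare x ∧ ¬ IsUnit x} := by
    ext x
    simp only [Set.mem_setOf_eq, Set.mem_union]
    tauto
  have hdisj : Disjoint {x : ZMod n | IsUnit x ∧ IsSquare x}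
      {x : ZMod n | IsSquare x ∧ ¬ IsUnit x} := by
    rw [Set.disjoint_left]
    rintro x ⟨hu, _⟩ ⟨_, hnu⟩
    exact hnu hu
  simp only [Nat.card_coe_set_eq]
  rw [hunion, Set.ncard_union_eq hdisj (Set.toFinite _) (Set.toFinite _), hset,
    Set.ncard_image_of_injective _ hinj]

private lemma card_squares_zero' (p : ℕ) : Nat.card {x : ZMod (p ^ 0) | IsSquare x} = 1 := by
  show Nat.card {x : ZMod 1 | IsSquare x} = 1
  have huniv : {x : ZMod 1 | IsSquare x} = Set.univ :=
    Set.eq_univ_of_forall fun x => ⟨x, Subsingleton.elim _ _⟩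
  rw [huniv, Nat.card_coe_set_eq, Set.ncard_univ, Nat.card_eq_fintype_card, ZMod.card]

private lemma card_squares_one' {p : ℕ} (hp : p.Prime) (hp2 : p ≠ 2) :
    2 * Nat.card {x : ZMod (p ^ 1) | IsSquare x} = p + 1 := by
  haveI : NeZero (p ^ 1) := ⟨pow_ne_zero _ hp.pos.ne'⟩
  have hp2le := hp.two_le
  have hset : {x : ZMod (p ^ 1) | IsSquare x} =
      {x : ZMod (p ^ 1) | IsUnit x ∧ IsSquare x} ∪ {(0 : ZMod (p ^ 1))} := by
    ext x
    simp only [Set.mem_setOf_eq, Set.mem_union, Set.mem_singleton_iff]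
    constructor
    · intro hs
      by_cases hu : IsUnit x
      · exact Or.inl ⟨hu, hs⟩
      · right
        obtain ⟨y, rfl⟩ := hs
        have hy : ¬ IsUnit y := fun h => hu (h.mul h)
        have hnc : ¬ Nat.Coprime y.val (p ^ 1) := by
          intro hcop
          apply hy
          have := (ZMod.isUnit_iff_coprime y.val (p ^ 1)).mpr hcop
          rwa [ZMod.natCast_rightInverse y] at this
        have hpy : p ∣ y.val := by
          by_contra hnd
          apply hnc
          show Nat.Coprime y.val (p ^ 1)
          exact Nat.Coprime.pow_right _ (Nat.coprime_comm.mp (hp.coprime_iff_not_dvd.mpr hnd))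
        have hy0 : y.val = 0 := by
          have hlt : y.val < p := lt_of_lt_of_le (ZMod.val_lt y) (le_of_eq (pow_one p))
          exact Nat.eq_zero_of_dvd_of_lt hpy hlt
        have hyz : y = 0 := by
          have := ZMod.natCast_rightInverse y
          rw [hy0] at this
          simpa using this.symm
        rw [hyz, mul_zero]
    · rintro (⟨_, hs⟩ | rfl)
      · exact hs
      · exact ⟨0, by ring⟩
  have hdisj : Disjoint {x : ZMod (p ^ 1) | IsUnit x ∧ IsSquare x} {(0 : ZMod (p ^ 1))} := by
    rw [Set.disjoint_right]
    rintro x rfl ⟨hu, _⟩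
    exact zmod_not_isUnit_zero (by rw [pow_one]; omega) hu
  have hU := two_mul_card_unit_squares hp hp2 (m := 1) le_rfl
  rw [show (1 : ℕ) - 1 = 0 from rfl, pow_zero, one_mul] at hU
  calc 2 * Nat.card {x : ZMod (p ^ 1) | IsSquare x}
      = 2 * ({x : ZMod (p ^ 1) | IsUnit x ∧ IsSquare x}.ncard
          + ({(0 : ZMod (p ^ 1))} : Set (ZMod (p ^ 1))).ncard) := by
        rw [Nat.card_coe_set_eq, hset,
          Set.ncard_union_eq hdisj (Set.toFinite _) (Set.toFinite _)]
    _ = 2 * Nat.card {x : ZMod (p ^ 1) | IsUnit x ∧ IsSquare x} + 2 := by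
        rw [Set.ncard_singleton, ← Nat.card_coe_set_eq]; ring
    _ = (p - 1) + 2 := by rw [hU]
    _ = p + 1 := by omega

private lemma arith_aux' (p q : ℕ) (hp : 3 ≤ p) : (p + 1) * (q * (p - 1)) + q = p * p * q := by
  obtain ⟨k, rfl⟩ := Nat.exists_eq_add_of_le hp
  have h1 : 3 + k - 1 = 2 + k := by omega
  rw [h1]; ring

private lemma key_formula {p : ℕ} (hp : p.Prime) (hp2 : p ≠ 2) : ∀ r : ℕ,
    2 * (p + 1) * Nat.card {x : ZMod (p ^ r) | IsSquare x} =
      if Even r then p ^ (r + 1) + p + 2 else p ^ (r + 1) + 2 * p + 1 := by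
  have hp3 : 3 ≤ p := by have := hp.two_le; omega
  intro r
  induction r using Nat.strong_induction_on with
  | _ r ih =>
    rcases r with _ | _ | r
    · rw [if_pos Even.zero, card_squares_zero' p, pow_one]
      ring
    · rw [if_neg (by simp)]
      calc 2 * (p + 1) * Nat.card {x : ZMod (p ^ 1) | IsSquare x}
          = (p + 1) * (2 * Nat.card {x : ZMod (p ^ 1) | IsSquare x}) := by ring
        _ = (p + 1) * (p + 1) := by rw [card_squares_one' hp hp2]
        _ = p ^ (1 + 1) + 2 * p + 1 := by ring
    · have hb := ih r (by omega)
      have hU := two_mul_card_unit_squares hp hp2 (m := r + 2) (by omega)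
      have hU' : 2 * Nat.card {x : ZMod (p ^ (r + 2)) | IsUnit x ∧ IsSquare x}
          = p ^ (r + 1) * (p - 1) := hU
      rw [card_squares_step hp r]
      have heq : Even (r + 2) ↔ Even r := by simp [Nat.even_add]
      by_cases he : Even r
      · rw [if_pos (heq.mpr he)]
        rw [if_pos he] at hb
        calc 2 * (p + 1) * (Nat.card {x : ZMod (p ^ (r + 2)) | IsUnit x ∧ IsSquare x}
              + Nat.card {x : ZMod (p ^ r) | IsSquare x})
            = (p + 1) * (2 * Nat.card {x : ZMod (p ^ (r + 2)) | IsUnit x ∧ IsSquare x})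
              + 2 * (p + 1) * Nat.card {x : ZMod (p ^ r) | IsSquare x} := by ring
          _ = (p + 1) * (p ^ (r + 1) * (p - 1)) + (p ^ (r + 1) + p + 2) := by rw [hU', hb]
          _ = ((p + 1) * (p ^ (r + 1) * (p - 1)) + p ^ (r + 1)) + (p + 2) := by ring
          _ = p * p * p ^ (r + 1) + (p + 2) := by rw [arith_aux' p (p ^ (r + 1)) hp3]
          _ = p ^ (r + 2 + 1) + p + 2 := by ring
      · rw [if_neg (fun h => he (heq.mp h))]
        rw [if_neg he] at hb
        calc 2 * (p + 1) * (Nat.card {x : ZMod (p ^ (r + 2)) | IsUnit x ∧ IsSquare x}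
              + Nat.card {x : ZMod (p ^ r) | IsSquare x})
            = (p + 1) * (2 * Nat.card {x : ZMod (p ^ (r + 2)) | IsUnit x ∧ IsSquare x})
              + 2 * (p + 1) * Nat.card {x : ZMod (p ^ r) | IsSquare x} := by ring
          _ = (p + 1) * (p ^ (r + 1) * (p - 1)) + (p ^ (r + 1) + 2 * p + 1) := by rw [hU', hb]
          _ = ((p + 1) * (p ^ (r + 1) * (p - 1)) + p ^ (r + 1)) + (2 * p + 1) := by ring
          _ = p * p * p ^ (r + 1) + (2 * p + 1) := by rw [arith_aux' p (p ^ (r + 1)) hp3]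
          _ = p ^ (r + 2 + 1) + 2 * p + 1 := by ring

theorem card_squares_oddPrimePower (p : ℕ) (hp : p.Prime) (hp2 : p ≠ 2) (r : ℕ) (hr : 1 ≤ r) :
    (Even r →
      Nat.card (Set.range (fun y : ZMod (p ^ r) => y ^ 2)) =
        (p ^ (r + 1) + p + 2) / (2 * (p + 1))) ∧
    (Odd r →
      Nat.card (Set.range (fun y : ZMod (p ^ r) => y ^ 2)) =
        (p ^ (r + 1) + 2 * p + 1) / (2 * (p + 1))) := by
  have hseteq : (Set.range (fun y : ZMod (p ^ r) => y ^ 2)) = {x : ZMod (p ^ r) | IsSquare x} := by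
    ext x
    simp only [Set.mem_range, Set.mem_setOf_eq]
    constructor
    · rintro ⟨y, rfl⟩; exact ⟨y, by ring⟩
    · rintro ⟨y, rfl⟩; exact ⟨y, by ring⟩
  have hk := key_formula hp hp2 r
  have hpos : 0 < 2 * (p + 1) := by omega
  constructor
  · intro he
    rw [if_pos he] at hk
    rw [hseteq, ← hk]
    exact (Nat.mul_div_cancel_left _ hpos).symm
  · intro ho
    rw [if_neg (Nat.not_even_iff_odd.mpr ho)] at hk
    rw [hseteq, ← hk]
    exact (Nat.mul_div_cancel_left _ hpos).symm
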